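/- Suppose the system ż = A11 z + p(y), ξ̇1 = v1 + k1(z,ξ), ξ̇2 = ξ3, ξ̇3 = v2 + k2(z,ξ), y = (ξ1, ξ2) admits a C^1 positive definite storage function V(z,ξ) satisfying V̇ ≤ vᵀẏ along all trajectories. Then the matrix A11 is Lyapunov stable; that is, for the linear system ż = A11 z, the function z ↦ V(z, 0) is a positive definite Lyapunov function with nonincreasing value along solutions, and hence every eigenvalue of A11 lies in the closed left half-plane with purely imaginary eigenvalues semisimple. -/

import Mathlib

open scoped BigOperators
open Matrix

/-- A real square matrix is Lyapunov stable if its spectrum lies in the closed left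
half-plane and every purely imaginary eigenvalue is semisimple. -/
def LyapunovStableMatrix {n : ℕ} (A : Matrix (Fin n) (Fin n) ℝ) : Prop :=
  ∀ μ ∈ spectrum ℂ (A.map (algebraMap ℝ ℂ)), μ.re ≤ 0 ∧
    (μ.re = 0 → ∀ v : Fin n → ℂ,
      ((A.map (algebraMap ℝ ℂ) - μ • 1) * (A.map (algebraMap ℝ ℂ) - μ • 1)).mulVec v = 0 →
      (A.map (algebraMap ℝ ℂ) - μ • 1).mulVec v = 0)


/-- Real part of a complex solution is a real solution. -/
lemma re_sol {m : ℕ} (A : Matrix (Fin m) (Fin m) ℝ) (c : ℝ → Fin m → ℂ)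
    (hc : ∀ t, HasDerivAt c ((A.map (algebraMap ℝ ℂ)).mulVec (c t)) t) :
    ∀ t, HasDerivAt (fun t i => (c t i).re) (A.mulVec (fun i => (c t i).re)) t := by
  intro t
  rw [hasDerivAt_pi]
  intro i
  have h := (hasDerivAt_pi.1 (hc t)) i
  have h2 := Complex.reCLM.hasFDerivAt.comp_hasDerivAt t h
  convert h2 using 1
  on_goal 1 => rfl
  simp only [Matrix.mulVec, dotProduct, Complex.reCLM_apply, Matrix.map_apply]
  rw [Complex.re_sum]
  congr 1; ext j
  simp [Complex.mul_re]

lemma im_sol {m : ℕ} (A : Matrix (Fin m) (Fin m) ℝ) (c : ℝ → Fin m → ℂ)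
    (hc : ∀ t, HasDerivAt c ((A.map (algebraMap ℝ ℂ)).mulVec (c t)) t) :
    ∀ t, HasDerivAt (fun t i => (c t i).im) (A.mulVec (fun i => (c t i).im)) t := by
  intro t
  rw [hasDerivAt_pi]
  intro i
  have h := (hasDerivAt_pi.1 (hc t)) i
  have h2 := Complex.imCLM.hasFDerivAt.comp_hasDerivAt t h
  convert h2 using 1
  on_goal 1 => rfl
  simp only [Matrix.mulVec, dotProduct, Complex.imCLM_apply, Matrix.map_apply]
  rw [Complex.im_sum]
  congr 1; ext j
  simp [Complex.mul_im]

lemma cbound {m : ℕ} (A : Matrix (Fin m) (Fin m) ℝ)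
    (hb : ∀ w : ℝ → Fin m → ℝ, (∀ t, HasDerivAt w (A.mulVec (w t)) t) →
      ∃ C, ∀ t, 0 ≤ t → ‖w t‖ ≤ C)
    (c : ℝ → Fin m → ℂ)
    (hc : ∀ t, HasDerivAt c ((A.map (algebraMap ℝ ℂ)).mulVec (c t)) t) :
    ∃ C, ∀ t, 0 ≤ t → ∀ i, ‖c t i‖ ≤ C := by
  obtain ⟨Cr, hCr⟩ := hb _ (re_sol A c hc)
  obtain ⟨Ci, hCi⟩ := hb _ (im_sol A c hc)
  refine ⟨Cr + Ci, fun t ht i => ?_⟩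
  have h1 : |(c t i).re| ≤ Cr := le_trans (norm_le_pi_norm (fun i => (c t i).re) i) (hCr t ht)
  have h2 : |(c t i).im| ≤ Ci := le_trans (norm_le_pi_norm (fun i => (c t i).im) i) (hCi t ht)
  have := Complex.norm_le_abs_re_add_abs_im (c t i)
  linarith


lemma bound_of_lyap {m : ℕ} (A : Matrix (Fin m) (Fin m) ℝ) (V0 : (Fin m → ℝ) → ℝ)
    (hcont : Continuous V0) (h0 : V0 0 = 0) (hpos : ∀ z, z ≠ 0 → 0 < V0 z)
    (hmono : ∀ w : ℝ → Fin m → ℝ, (∀ t, HasDerivAt w (A.mulVec (w t)) t) →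
      ∀ s t : ℝ, 0 ≤ s → s ≤ t → V0 (w t) ≤ V0 (w s)) :
    ∀ w : ℝ → Fin m → ℝ, (∀ t, HasDerivAt w (A.mulVec (w t)) t) →
      ∃ C, ∀ t, 0 ≤ t → ‖w t‖ ≤ C := by
  rcases isEmpty_or_nonempty (Fin m) with hE | hNE
  · intro w hw
    refine ⟨0, fun t ht => ?_⟩
    have : w t = 0 := Subsingleton.elim _ _
    simp [this]
  · -- min of V0 on unit sphere
    have hsph : IsCompact (Metric.sphere (0 : Fin m → ℝ) 1) := isCompact_sphere _ _
    have hne : (Metric.sphere (0 : Fin m → ℝ) 1).Nonempty :=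
      NormedSpace.sphere_nonempty.2 zero_le_one
    obtain ⟨z0, hz0, hz0min⟩ := hsph.exists_isMinOn hne hcont.continuousOn
    have hz0ne : z0 ≠ 0 := by
      intro h
      rw [h] at hz0
      simp at hz0
    have hε : 0 < V0 z0 := hpos z0 hz0ne
    obtain ⟨δ, hδpos, hδ⟩ := Metric.continuousAt_iff.1 (hcont.continuousAt (x := (0 : Fin m → ℝ))) (V0 z0) hε
    set δ' := min δ (1/2) with hδ'def
    have hδ'pos : 0 < δ' := lt_min hδpos (by norm_num)
    have claim : ∀ w : ℝ → Fin m → ℝ, (∀ t, HasDerivAt w (A.mulVec (w t)) t) →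
        ‖w 0‖ < δ' → ∀ t, 0 ≤ t → ‖w t‖ < 1 := by
      intro w hw hsmall t ht
      by_contra hge
      push_neg at hge
      have hdw : Differentiable ℝ w := fun t => (hw t).differentiableAt
      have hcw : Continuous fun s => ‖w s‖ := hdw.continuous.norm
      have hmem : (1 : ℝ) ∈ Set.Icc ‖w 0‖ ‖w t‖ :=
        ⟨le_of_lt (lt_of_lt_of_le hsmall (le_trans (min_le_right _ _) (by norm_num))), hge⟩
      obtain ⟨t1, ht1mem, ht1⟩ := intermediate_value_Icc ht hcw.continuousOn hmem
      have hwt1 : w t1 ∈ Metric.sphere (0 : Fin m → ℝ) 1 := by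
        simp [Metric.mem_sphere, dist_zero_right, ht1]
      have hge1 : V0 z0 ≤ V0 (w t1) := hz0min hwt1
      have hle1 : V0 (w t1) ≤ V0 (w 0) := hmono w hw 0 t1 le_rfl ht1mem.1
      have hlt : V0 (w 0) < V0 z0 := by
        have hd : dist (w 0) 0 < δ := by
          rw [dist_zero_right]
          exact lt_of_lt_of_le hsmall (min_le_left _ _)
        have := hδ hd
        rw [Real.dist_eq, h0, sub_zero] at this
        exact lt_of_le_of_lt (le_abs_self _) this
      linarith
    intro w hw
    set c : ℝ := δ' / (2 * (‖w 0‖ + 1)) with hcdef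
    have hwnn : (0:ℝ) ≤ ‖w 0‖ := norm_nonneg _
    have hc : 0 < c := by positivity
    set wt : ℝ → Fin m → ℝ := fun t => c • w t with hwt
    have hwt' : ∀ t, HasDerivAt wt (A.mulVec (wt t)) t := by
      intro t
      have := (hw t).const_smul c
      rwa [← Matrix.mulVec_smul] at this
    have hwt0 : ‖wt 0‖ < δ' := by
      rw [hwt]
      simp only [norm_smul, Real.norm_eq_abs, abs_of_pos hc]
      rw [hcdef]
      rw [div_mul_eq_mul_div, div_lt_iff₀ (by positivity)]
      nlinarith
    refine ⟨1 / c, fun t ht => ?_⟩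
    have h1 := claim wt hwt' hwt0 t ht
    have h2 : ‖wt t‖ = c * ‖w t‖ := by
      rw [hwt]; simp [norm_smul, abs_of_pos hc]
    rw [h2] at h1
    rw [le_div_iff₀ hc]
    nlinarith [norm_nonneg (w t)]

lemma exp_deriv_aux (μ : ℂ) (t : ℝ) :
    HasDerivAt (fun s : ℝ => Complex.exp (↑s * μ)) (Complex.exp (↑t * μ) * μ) t := by
  have h1 : HasDerivAt (fun s : ℝ => (↑s * μ : ℂ)) μ t := by
    simpa using Complex.ofRealCLM.hasDerivAt.mul_const μ
  exact h1.cexp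

lemma lyap_of_bounded {m : ℕ} (A : Matrix (Fin m) (Fin m) ℝ)
    (hb : ∀ w : ℝ → Fin m → ℝ, (∀ t, HasDerivAt w (A.mulVec (w t)) t) →
      ∃ C, ∀ t, 0 ≤ t → ‖w t‖ ≤ C) :
    LyapunovStableMatrix A := by
  set Ac := A.map (algebraMap ℝ ℂ) with hAc
  intro μ hμ
  constructor
  · -- μ.re ≤ 0
    by_contra hre
    push_neg at hre
    -- get an eigenvector
    have h1 : ¬ IsUnit (algebraMap ℂ (Matrix (Fin m) (Fin m) ℂ) μ - Ac) := spectrum.mem_iff.mp hμ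
    have hdet : (algebraMap ℂ (Matrix (Fin m) (Fin m) ℂ) μ - Ac).det = 0 := by
      by_contra h
      exact h1 ((Matrix.isUnit_iff_isUnit_det _).2 (isUnit_iff_ne_zero.2 h))
    obtain ⟨v, hv0, hvk⟩ := Matrix.exists_mulVec_eq_zero_iff.2 hdet
    have hev : Ac.mulVec v = μ • v := by
      have h2 : (algebraMap ℂ (Matrix (Fin m) (Fin m) ℂ) μ - Ac).mulVec v
          = μ • v - Ac.mulVec v := by
        rw [Matrix.sub_mulVec, Algebra.algebraMap_eq_smul_one, Matrix.smul_mulVec,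
          Matrix.one_mulVec]
      rw [h2] at hvk
      linear_combination (norm := module) -hvk
    set c : ℝ → Fin m → ℂ := fun t i => Complex.exp (↑t * μ) * v i with hcdef
    have hc : ∀ t, HasDerivAt c (Ac.mulVec (c t)) t := by
      intro t
      rw [hasDerivAt_pi]
      intro i
      have h2 := (exp_deriv_aux μ t).mul_const (v i)
      convert h2 using 1
      on_goal 1 => rfl
      have h3 : c t = Complex.exp (↑t * μ) • v := rfl
      rw [h3, Matrix.mulVec_smul, hev]
      simp [smul_eq_mul]
      all_goals ring
    obtain ⟨C, hC⟩ := cbound A hb c hc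
    obtain ⟨i, hvi⟩ : ∃ i, v i ≠ 0 := Function.ne_iff.mp hv0
    have hvipos : 0 < ‖v i‖ := norm_pos_iff.2 hvi
    set t0 : ℝ := max 0 (C / ‖v i‖ / μ.re) with ht0def
    have ht0 : 0 ≤ t0 := le_max_left _ _
    have key := hC t0 ht0 i
    have habs : ‖c t0 i‖ = Real.exp (t0 * μ.re) * ‖v i‖ := by
      simp only [hcdef, norm_mul, Complex.norm_exp]
      congr 2
      simp
    have hexp : C / ‖v i‖ + 1 ≤ Real.exp (t0 * μ.re) := by
      have h4 : C / ‖v i‖ / μ.re ≤ t0 := le_max_right _ _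
      have h5 : C / ‖v i‖ ≤ t0 * μ.re := by
        rw [div_le_iff₀ hre] at h4
        linarith
      linarith [Real.add_one_le_exp (t0 * μ.re)]
    have h8 := mul_le_mul_of_nonneg_right hexp hvipos.le
    have h9 : (C / ‖v i‖ + 1) * ‖v i‖ = C + ‖v i‖ := by
      rw [add_mul, div_mul_cancel₀ _ (ne_of_gt hvipos), one_mul]
    rw [habs] at key
    linarith
  · -- semisimplicity of imaginary eigenvalues
    intro hre v hNN
    by_contra hu0
    set N := Ac - μ • (1 : Matrix (Fin m) (Fin m) ℂ) with hN
    set u := N.mulVec v with hudef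
    have hNu : N.mulVec u = 0 := by
      rw [hudef, Matrix.mulVec_mulVec]
      exact hNN
    have hAu : Ac.mulVec u = μ • u := by
      have h2 : N.mulVec u = Ac.mulVec u - μ • u := by
        rw [hN, Matrix.sub_mulVec, Matrix.smul_mulVec, Matrix.one_mulVec]
      rw [h2] at hNu
      linear_combination (norm := module) hNu
    have hAv : Ac.mulVec v = μ • v + u := by
      have h2 : N.mulVec v = Ac.mulVec v - μ • v := by
        rw [hN, Matrix.sub_mulVec, Matrix.smul_mulVec, Matrix.one_mulVec]
      rw [← hudef] at h2
      linear_combination (norm := module) -h2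
    set c : ℝ → Fin m → ℂ := fun t i => Complex.exp (↑t * μ) * (v i + ↑t * u i) with hcdef
    have hc : ∀ t, HasDerivAt c (Ac.mulVec (c t)) t := by
      intro t
      rw [hasDerivAt_pi]
      intro i
      have hlin : HasDerivAt (fun s : ℝ => (v i + ↑s * u i : ℂ)) (u i) t := by
        have h0 : HasDerivAt (fun s : ℝ => ((s : ℂ) * u i)) (u i) t := by
          simpa using (Complex.ofRealCLM.hasDerivAt (x := t)).mul_const (u i)
        exact ((hasDerivAt_const t (v i)).add h0).congr_deriv (zero_add _)
      have h2 := (exp_deriv_aux μ t).mul hlin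
      convert h2 using 1
      on_goal 1 => rfl
      on_goal 1 => rfl
      have h3 : c t = Complex.exp (↑t * μ) • (v + (↑t : ℂ) • u) := by
        funext j
        simp [hcdef, smul_eq_mul]
        all_goals ring
      rw [h3, Matrix.mulVec_smul, Matrix.mulVec_add, Matrix.mulVec_smul, hAv, hAu]
      simp [smul_eq_mul]
      all_goals ring
    obtain ⟨C, hC⟩ := cbound A hb c hc
    obtain ⟨i, hui⟩ : ∃ i, u i ≠ 0 := Function.ne_iff.mp hu0
    have huipos : 0 < ‖u i‖ := norm_pos_iff.2 hui
    set t0 : ℝ := (C + ‖v i‖ + 1) / ‖u i‖ with ht0def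
    have hCnn : (0:ℝ) ≤ C := le_trans (norm_nonneg _) (hC 0 le_rfl i)
    have ht0 : 0 ≤ t0 := by positivity
    have key := hC t0 ht0 i
    have habs : ‖c t0 i‖ = ‖v i + ↑t0 * u i‖ := by
      simp only [hcdef, norm_mul, Complex.norm_exp]
      have : ((t0 : ℂ) * μ).re = t0 * μ.re := by simp
      rw [this, hre, mul_zero, Real.exp_zero, one_mul]
    have hlow : t0 * ‖u i‖ - ‖v i‖ ≤ ‖v i + ↑t0 * u i‖ := by
      have h6 : ‖(↑t0 * u i : ℂ)‖ ≤ ‖v i + ↑t0 * u i‖ + ‖v i‖ := by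
        calc ‖(↑t0 * u i : ℂ)‖ = ‖(v i + ↑t0 * u i) - v i‖ := by ring_nf
        _ ≤ ‖v i + ↑t0 * u i‖ + ‖v i‖ := norm_sub_le _ _
      have h7 : ‖(↑t0 * u i : ℂ)‖ = t0 * ‖u i‖ := by
        rw [norm_mul, Complex.norm_real, Real.norm_eq_abs, abs_of_nonneg ht0]
      linarith
    have ht0u : t0 * ‖u i‖ = C + ‖v i‖ + 1 := by
      rw [ht0def, div_mul_cancel₀ _ (ne_of_gt huipos)]
    rw [habs] at key
    linarith


theorem stmt3 (m p1 p2 : ℕ)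
    (A11 : Matrix (Fin m) (Fin m) ℝ)
    (p : ((Fin p1 → ℝ) × (Fin p2 → ℝ)) → (Fin m → ℝ)) (hp0 : p 0 = 0)
    (k1 : (Fin m → ℝ) → (Fin p1 → ℝ) → (Fin p2 → ℝ) → (Fin p2 → ℝ) → (Fin p1 → ℝ))
    (k2 : (Fin m → ℝ) → (Fin p1 → ℝ) → (Fin p2 → ℝ) → (Fin p2 → ℝ) → (Fin p2 → ℝ))
    (hk1 : Continuous fun x : (Fin m → ℝ) × (Fin p1 → ℝ) × (Fin p2 → ℝ) × (Fin p2 → ℝ) =>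
      k1 x.1 x.2.1 x.2.2.1 x.2.2.2)
    (hk2 : Continuous fun x : (Fin m → ℝ) × (Fin p1 → ℝ) × (Fin p2 → ℝ) × (Fin p2 → ℝ) =>
      k2 x.1 x.2.1 x.2.2.1 x.2.2.2)
    (V : (Fin m → ℝ) → (Fin p1 → ℝ) → (Fin p2 → ℝ) → (Fin p2 → ℝ) → ℝ)
    (hVC : ContDiff ℝ 1 fun x : (Fin m → ℝ) × (Fin p1 → ℝ) × (Fin p2 → ℝ) × (Fin p2 → ℝ) =>
      V x.1 x.2.1 x.2.2.1 x.2.2.2)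
    (hV0 : V 0 0 0 0 = 0)
    (hVpos : ∀ z ξ1 ξ2 ξ3, (z, ξ1, ξ2, ξ3) ≠ (0, 0, 0, 0) → 0 < V z ξ1 ξ2 ξ3)
    -- the NI dissipation inequality V̇ ≤ vᵀẏ holds along all C¹ trajectories
    (hNI : ∀ (z : ℝ → Fin m → ℝ) (ξ1 : ℝ → Fin p1 → ℝ) (ξ2 ξ3 : ℝ → Fin p2 → ℝ)
      (v1 : ℝ → Fin p1 → ℝ) (v2 : ℝ → Fin p2 → ℝ)
      (z' : ℝ → Fin m → ℝ) (ξ1' : ℝ → Fin p1 → ℝ) (ξ2' ξ3' : ℝ → Fin p2 → ℝ),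
      (∀ t, HasDerivAt z (z' t) t) → (∀ t, HasDerivAt ξ1 (ξ1' t) t) →
      (∀ t, HasDerivAt ξ2 (ξ2' t) t) → (∀ t, HasDerivAt ξ3 (ξ3' t) t) →
      (∀ t, z' t = A11.mulVec (z t) + p (ξ1 t, ξ2 t)) →
      (∀ t, ξ1' t = v1 t + k1 (z t) (ξ1 t) (ξ2 t) (ξ3 t)) →
      (∀ t, ξ2' t = ξ3 t) →
      (∀ t, ξ3' t = v2 t + k2 (z t) (ξ1 t) (ξ2 t) (ξ3 t)) →
      ∀ t : ℝ, 0 ≤ t →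
        deriv (fun s => V (z s) (ξ1 s) (ξ2 s) (ξ3 s)) t ≤
          (∑ i, v1 t i * ξ1' t i) + ∑ i, v2 t i * ξ2' t i) :
    (∀ w : ℝ → Fin m → ℝ, (∀ t, HasDerivAt w (A11.mulVec (w t)) t) →
      ∀ s t : ℝ, 0 ≤ s → s ≤ t → V (w t) 0 0 0 ≤ V (w s) 0 0 0) ∧
    LyapunovStableMatrix A11 := by
  have partA : ∀ w : ℝ → Fin m → ℝ, (∀ t, HasDerivAt w (A11.mulVec (w t)) t) →
      ∀ s t : ℝ, 0 ≤ s → s ≤ t → V (w t) 0 0 0 ≤ V (w s) 0 0 0 := by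
    intro w hw s t hs hst
    have hd := hNI w (fun _ => 0) (fun _ => 0) (fun _ => 0)
      (fun t => -k1 (w t) 0 0 0) (fun t => -k2 (w t) 0 0 0)
      (fun t => A11.mulVec (w t)) (fun _ => 0) (fun _ => 0) (fun _ => 0)
      hw (fun t => hasDerivAt_const t 0) (fun t => hasDerivAt_const t 0)
      (fun t => hasDerivAt_const t 0)
      (fun t => by
        have : ((0 : Fin p1 → ℝ), (0 : Fin p2 → ℝ)) = (0 : (Fin p1 → ℝ) × (Fin p2 → ℝ)) := rfl
        rw [this, hp0, add_zero])
      (fun t => by simp) (fun t => rfl) (fun t => by simp)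
    have hd' : ∀ x : ℝ, 0 ≤ x → deriv (fun s => V (w s) 0 0 0) x ≤ 0 := by
      intro x hx
      have := hd x hx
      simpa using this
    have hdw : Differentiable ℝ w := fun t => (hw t).differentiableAt
    have hh : Differentiable ℝ (fun s : ℝ =>
        ((w s, ((0 : Fin p1 → ℝ), ((0 : Fin p2 → ℝ), (0 : Fin p2 → ℝ)))) :
          (Fin m → ℝ) × (Fin p1 → ℝ) × (Fin p2 → ℝ) × (Fin p2 → ℝ))) :=
      hdw.prodMk (differentiable_const _)
    have hg : Differentiable ℝ (fun s : ℝ => V (w s) 0 0 0) :=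
      (hVC.differentiable one_ne_zero).comp hh
    have hanti := antitoneOn_of_deriv_nonpos (convex_Icc s t)
      hg.continuous.continuousOn hg.differentiableOn
      (fun x hx => by
        rw [interior_Icc] at hx
        exact hd' x (le_of_lt (lt_of_le_of_lt hs hx.1)))
    exact hanti ⟨le_rfl, hst⟩ ⟨hst, le_rfl⟩ hst
  refine ⟨partA, ?_⟩
  apply lyap_of_bounded
  apply bound_of_lyap A11 (fun z => V z 0 0 0)
  · have hcm : Continuous (fun z : Fin m → ℝ =>
        ((z, ((0 : Fin p1 → ℝ), ((0 : Fin p2 → ℝ), (0 : Fin p2 → ℝ)))) :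
          (Fin m → ℝ) × (Fin p1 → ℝ) × (Fin p2 → ℝ) × (Fin p2 → ℝ))) :=
      continuous_id.prodMk continuous_const
    exact hVC.continuous.comp hcm
  · exact hV0
  · intro z hz
    exact hVpos z 0 0 0 (by simp [hz])
  · exact partA
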